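/- Let ℓ ≥ 1 and let n satisfy 2·3^ℓ < n < 3^{ℓ+1}. For any I ⊆ {1,2,3}^ℓ with card I = n − 2·3^ℓ, set α_n(I) = ⋃_{σ ∈ {1,2,3}^ℓ \ I} S_σ(α₂) ∪ ⋃_{σ ∈ I} S_σ(α₃), where α₃ = {1/10, 1/2, 9/10}. Then the distortion error of α_n(I) is V(P; α_n(I)) = 75^{−ℓ} ( (3^{ℓ+1} − n)·(821/28125) + (n − 2·3^ℓ)·(1/225) ). -/

import Mathlib

open MeasureTheory Filter
open scoped ENNReal

noncomputable section

/-- The three contractive similarities `S j x = x/5 + 2 j/5` (indexing `j = 0,1,2`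
corresponds to the paper's `j = 1,2,3`). -/
def S (j : Fin 3) : ℝ → ℝ := fun x => x / 5 + 2 * (j : ℝ) / 5

/-- For a word `σ ∈ {1,2,3}^k`, the composition `S_σ = S_{σ 0} ∘ ⋯ ∘ S_{σ (k-1)}`. -/
def Sword {k : ℕ} (σ : Fin k → Fin 3) : ℝ → ℝ :=
  (List.ofFn fun i => S (σ i)).foldr (· ∘ ·) id

/-- The basic interval `J j = S j ([0,1])`. -/
def J (j : Fin 3) : Set ℝ := S j '' Set.Icc 0 1

/-- The interval `J_σ = S_σ([0,1])`. -/
def Jword {k : ℕ} (σ : Fin k → Fin 3) : Set ℝ := Sword σ '' Set.Icc 0 1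

/-- The distortion error `V(P; α) = ∫ min_{a ∈ α} (x - a)^2 dP(x)`. -/
def distortion (P : Measure ℝ) (α : Set ℝ) : ℝ :=
  ∫ x, (⨅ a : α, (x - (a : ℝ)) ^ 2) ∂P

/-- The `n`-th quantization error
`V_n = inf { V(P; α) : α ⊂ ℝ finite, 1 ≤ card α ≤ n }`. -/
def quantErr (P : Measure ℝ) (n : ℕ) : ℝ :=
  sInf {e | ∃ α : Set ℝ, α.Finite ∧ α.Nonempty ∧ α.ncard ≤ n ∧ distortion P α = e}

/-- The self-similarity equation `P = (1/3)(P∘S₁⁻¹ + P∘S₂⁻¹ + P∘S₃⁻¹)`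
characterizing the standard triadic Cantor distribution. -/
def IsTriadicCantor (P : Measure ℝ) : Prop :=
  P = (3 : ℝ≥0∞)⁻¹ • (P.map (S 0) + P.map (S 1) + P.map (S 2))

open scoped Topology

lemma S_apply (j : Fin 3) (x : ℝ) : S j x = x / 5 + 2 * (j : ℝ) / 5 := rfl

lemma continuous_S (j : Fin 3) : Continuous (S j) := by
  unfold S; fun_prop

lemma Sword_zero (σ : Fin 0 → Fin 3) : Sword σ = id := rfl

lemma Sword_succ {k : ℕ} (σ : Fin (k+1) → Fin 3) :
    Sword σ = S (σ 0) ∘ Sword (fun i => σ i.succ) := by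
  unfold Sword
  rw [List.ofFn_succ]
  rfl

lemma Sword_cons {k : ℕ} (j : Fin 3) (τ : Fin k → Fin 3) :
    Sword (Fin.cons j τ) = S j ∘ Sword τ := by
  rw [Sword_succ]
  simp [Fin.cons_zero, Fin.cons_succ]

lemma continuous_Sword : ∀ {k : ℕ} (σ : Fin k → Fin 3), Continuous (Sword σ) := by
  intro k
  induction k with
  | zero => intro σ; rw [Sword_zero]; exact continuous_id
  | succ k ih =>
    intro σ
    rw [Sword_succ]
    exact (continuous_S _).comp (ih _)

lemma Sword_apply : ∀ {k : ℕ} (σ : Fin k → Fin 3) (x : ℝ),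
    Sword σ x = x / 5 ^ k + Sword σ 0 := by
  intro k
  induction k with
  | zero => intro σ x; simp [Sword_zero]
  | succ k ih =>
    intro σ x
    rw [Sword_succ]
    simp only [Function.comp_apply, S_apply]
    rw [ih (fun i => σ i.succ) x, ih (fun i => σ i.succ) 0]
    ring

lemma Sword_sub {k : ℕ} (σ : Fin k → Fin 3) (x y : ℝ) :
    Sword σ x - Sword σ y = (x - y) / 5 ^ k := by
  rw [Sword_apply σ x, Sword_apply σ y]; ring

lemma S_mapsTo (j : Fin 3) : Set.MapsTo (S j) (Set.Icc 0 1) (Set.Icc 0 1) := by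
  intro x hx
  obtain ⟨h0, h1⟩ := hx
  have hj0 : (0:ℝ) ≤ (j:ℝ) := by positivity
  have hj2 : (j:ℝ) ≤ 2 := by
    have := j.isLt
    have : (j:ℕ) ≤ 2 := by omega
    exact_mod_cast this
  constructor <;> simp only [S_apply] <;> nlinarith

lemma Sword_mapsTo : ∀ {k : ℕ} (σ : Fin k → Fin 3),
    Set.MapsTo (Sword σ) (Set.Icc 0 1) (Set.Icc 0 1) := by
  intro k
  induction k with
  | zero => intro σ; rw [Sword_zero]; exact Set.mapsTo_id _
  | succ k ih =>
    intro σ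
    rw [Sword_succ]
    exact (S_mapsTo _).comp (ih _)

lemma fin3_cast_sep {a b : Fin 3} (h : a ≠ b) : (1:ℝ) ≤ |(a:ℝ) - (b:ℝ)| := by
  have hv : (a:ℕ) ≠ (b:ℕ) := fun hc => h (Fin.ext hc)
  have h1 : (1:ℤ) ≤ |(a:ℤ) - (b:ℤ)| := by
    rcases lt_or_gt_of_ne (fun hc => hv (by exact_mod_cast hc) : ((a:ℤ)) ≠ (b:ℤ)) with hlt | hgt
    · rw [abs_sub_comm, abs_of_pos (by linarith)]; omega
    · rw [abs_of_pos (by linarith)]; omega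
  calc (1:ℝ) = ((1:ℤ):ℝ) := by norm_num
    _ ≤ ((|(a:ℤ) - (b:ℤ)|:ℤ):ℝ) := by exact_mod_cast h1
    _ = |(a:ℝ) - (b:ℝ)| := by push_cast [Int.cast_abs]; norm_num

lemma Sword_sep : ∀ {k : ℕ} (σ τ : Fin k → Fin 3), σ ≠ τ →
    ∀ x y : ℝ, x ∈ Set.Icc (0:ℝ) 1 → y ∈ Set.Icc (0:ℝ) 1 →
    (1:ℝ) / 5 ^ k ≤ |Sword σ x - Sword τ y| := by
  intro k
  induction k with
  | zero =>
    intro σ τ hne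
    exact absurd (Subsingleton.elim σ τ) hne
  | succ k ih =>
    intro σ τ hne x y hx hy
    rw [Sword_succ σ, Sword_succ τ]
    simp only [Function.comp_apply, S_apply]
    set u := Sword (fun i => σ i.succ) x with hu
    set v := Sword (fun i => τ i.succ) y with hv
    by_cases h0 : σ 0 = τ 0
    · have htail : (fun i : Fin k => σ i.succ) ≠ (fun i : Fin k => τ i.succ) := by
        intro hc
        apply hne
        funext i
        induction i using Fin.cases with
        | zero => exact h0
        | succ j => exact congrFun hc j
      have := ih _ _ htail x y hx hy
      rw [h0]
      have : (1:ℝ)/5^k ≤ |u - v| := this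
      have heq : u / 5 + 2 * (τ 0 : ℝ) / 5 - (v / 5 + 2 * (τ 0:ℝ) / 5) = (u - v)/5 := by ring
      rw [heq, abs_div, abs_of_pos (by norm_num : (0:ℝ) < 5)]
      rw [pow_succ]
      calc (1:ℝ) / (5^k * 5) = (1/5^k)/5 := by ring
        _ ≤ |u - v| / 5 := by linarith
    · have hu1 : u ∈ Set.Icc (0:ℝ) 1 := Sword_mapsTo _ hx
      have hv1 : v ∈ Set.Icc (0:ℝ) 1 := Sword_mapsTo _ hy
      have hsep := fin3_cast_sep h0
      have h15 : (1:ℝ)/5 ≤ |u / 5 + 2 * (σ 0 : ℝ) / 5 - (v / 5 + 2 * (τ 0:ℝ) / 5)| := by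
        have heq : u / 5 + 2 * (σ 0 : ℝ) / 5 - (v / 5 + 2 * (τ 0:ℝ) / 5)
            = (2 * ((σ 0:ℝ) - (τ 0:ℝ)) + (u - v))/5 := by ring
        rw [heq, abs_div, abs_of_pos (by norm_num : (0:ℝ) < 5)]
        have huv : |u - v| ≤ 1 := by
          rw [abs_le]; constructor <;> [linarith [hu1.1, hv1.2]; linarith [hu1.2, hv1.1]]
        have : 2 * |(σ 0:ℝ) - (τ 0:ℝ)| - |u - v| ≤ |2 * ((σ 0:ℝ) - (τ 0:ℝ)) + (u - v)| := by
          have := abs_add_le (2 * ((σ 0:ℝ) - (τ 0:ℝ)) + (u - v)) (-(u-v))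
          simp only [add_neg_cancel_right, abs_neg] at this
          rw [abs_mul, abs_of_pos (by norm_num : (0:ℝ) < 2)] at *
          linarith
        have h1 : (1:ℝ) ≤ |2 * ((σ 0:ℝ) - (τ 0:ℝ)) + (u - v)| := by linarith
        linarith
      calc (1:ℝ)/5^(k+1) ≤ 1/5 := by
            rw [div_le_div_iff₀ (by positivity) (by norm_num)]
            have : (5:ℝ) ≤ 5^(k+1) := by
              calc (5:ℝ) = 5^1 := by norm_num
                _ ≤ 5^(k+1) := by
                  apply pow_le_pow_right₀ (by norm_num)
                  omega
            linarith
        _ ≤ _ := h15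


lemma meas_eq {P : Measure ℝ} (hP : IsTriadicCantor P) (E : Set ℝ) (hE : MeasurableSet E) :
    P E = 3⁻¹ * (P (S 0 ⁻¹' E) + P (S 1 ⁻¹' E) + P (S 2 ⁻¹' E)) := by
  conv_lhs => rw [hP]
  simp [Measure.smul_apply, Measure.add_apply,
    Measure.map_apply (continuous_S _).measurable hE, smul_eq_mul]
  ring

lemma support_step {P : Measure ℝ} (hP : IsTriadicCantor P) (b : ℝ) (hb : 0 ≤ b) :
    P (Set.Icc (-b) (1+b))ᶜ ≤ P (Set.Icc (-(5*b)) (1+5*b))ᶜ := by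
  rw [meas_eq hP _ measurableSet_Icc.compl]
  have key : ∀ j : Fin 3, P (S j ⁻¹' (Set.Icc (-b) (1+b))ᶜ) ≤ P (Set.Icc (-(5*b)) (1+5*b))ᶜ := by
    intro j
    apply measure_mono
    rw [Set.preimage_compl]
    apply Set.compl_subset_compl.mpr
    intro x hx
    have hj0 : (0:ℝ) ≤ (j:ℝ) := by positivity
    have hj2 : (j:ℝ) ≤ 2 := by
      have h3 := j.isLt
      have h2 : (j:ℕ) ≤ 2 := by omega
      exact_mod_cast h2
    obtain ⟨hx1, hx2⟩ := hx
    constructor <;> simp only [S_apply] <;> nlinarith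
  calc 3⁻¹ * (P (S 0 ⁻¹' (Set.Icc (-b) (1+b))ᶜ) + P (S 1 ⁻¹' (Set.Icc (-b) (1+b))ᶜ)
        + P (S 2 ⁻¹' (Set.Icc (-b) (1+b))ᶜ))
      ≤ 3⁻¹ * (P (Set.Icc (-(5*b)) (1+5*b))ᶜ + P (Set.Icc (-(5*b)) (1+5*b))ᶜ
        + P (Set.Icc (-(5*b)) (1+5*b))ᶜ) :=
        mul_le_mul_right (add_le_add (add_le_add (key 0) (key 1)) (key 2)) _
    _ = P (Set.Icc (-(5*b)) (1+5*b))ᶜ := by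
        rw [show ∀ t : ℝ≥0∞, t + t + t = 3 * t from fun t => by ring, ← mul_assoc,
          ENNReal.inv_mul_cancel (by norm_num) (by norm_num), one_mul]

lemma support_iter {P : Measure ℝ} (hP : IsTriadicCantor P) (b : ℝ) (hb : 0 ≤ b) :
    ∀ m : ℕ, P (Set.Icc (-b) (1+b))ᶜ ≤ P (Set.Icc (-(5^m*b)) (1+5^m*b))ᶜ := by
  intro m
  induction m with
  | zero => simp
  | succ m ih =>
    refine ih.trans ?_
    have := support_step hP (5^m*b) (by positivity)
    calc P (Set.Icc (-(5^m*b)) (1+5^m*b))ᶜ ≤ P (Set.Icc (-(5*(5^m*b))) (1+5*(5^m*b)))ᶜ := this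
      _ = P (Set.Icc (-(5^(m+1)*b)) (1+5^(m+1)*b))ᶜ := by ring_nf

lemma support_pos {P : Measure ℝ} [IsProbabilityMeasure P] (hP : IsTriadicCantor P)
    (b : ℝ) (hb : 0 < b) : P (Set.Icc (-b) (1+b))ᶜ = 0 := by
  have htend : Tendsto (fun m : ℕ => P (Set.Icc (-(5^m*b)) (1+5^m*b))ᶜ) atTop
      (𝓝 (P (⋂ m : ℕ, (Set.Icc (-(5^m*b)) (1+5^m*b))ᶜ))) := by
    apply tendsto_measure_iInter_atTop
    · exact fun m => measurableSet_Icc.compl.nullMeasurableSet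
    · intro m m' hmm'
      apply Set.compl_subset_compl.mpr
      apply Set.Icc_subset_Icc
      · have : (5:ℝ)^m * b ≤ 5^m' * b := by
          apply mul_le_mul_of_nonneg_right _ hb.le
          exact pow_le_pow_right₀ (by norm_num) hmm'
        linarith
      · have : (5:ℝ)^m * b ≤ 5^m' * b := by
          apply mul_le_mul_of_nonneg_right _ hb.le
          exact pow_le_pow_right₀ (by norm_num) hmm'
        linarith
    · exact ⟨0, measure_ne_top P _⟩
  have hempty : (⋂ m : ℕ, (Set.Icc (-(5^m*b)) (1+5^m*b))ᶜ) = ∅ := by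
    rw [Set.eq_empty_iff_forall_notMem]
    intro x hx
    obtain ⟨m, hm⟩ := pow_unbounded_of_one_lt (|x|/b) (by norm_num : (1:ℝ) < 5)
    have hxm := Set.mem_iInter.mp hx m
    apply hxm
    have habs : |x| < 5^m * b := by
      rw [div_lt_iff₀ hb] at hm; linarith
    constructor
    · have := neg_abs_le x; linarith
    · have := le_abs_self x; linarith
  rw [hempty, measure_empty] at htend
  have hle : ∀ m : ℕ, P (Set.Icc (-b) (1+b))ᶜ ≤ P (Set.Icc (-(5^m*b)) (1+5^m*b))ᶜ :=
    support_iter hP b hb.le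
  exact le_antisymm (ge_of_tendsto' htend hle) zero_le

lemma support01 {P : Measure ℝ} [IsProbabilityMeasure P] (hP : IsTriadicCantor P) :
    P (Set.Icc (0:ℝ) 1)ᶜ = 0 := by
  have hsub : (Set.Icc (0:ℝ) 1)ᶜ ⊆ ⋃ m : ℕ, (Set.Icc (-(1/(m+1):ℝ)) (1+1/(m+1)))ᶜ := by
    intro x hx
    simp only [Set.mem_compl_iff, Set.mem_Icc, not_and_or, not_le] at hx
    rcases hx with hx | hx
    · obtain ⟨m, hm⟩ := exists_nat_one_div_lt (show (0:ℝ) < -x by linarith)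
      apply Set.mem_iUnion.mpr ⟨m, ?_⟩
      simp only [Set.mem_compl_iff, Set.mem_Icc, not_and_or, not_le]
      left; push_cast; push_cast at hm; linarith
    · obtain ⟨m, hm⟩ := exists_nat_one_div_lt (show (0:ℝ) < x - 1 by linarith)
      apply Set.mem_iUnion.mpr ⟨m, ?_⟩
      simp only [Set.mem_compl_iff, Set.mem_Icc, not_and_or, not_le]
      right; push_cast; push_cast at hm; linarith
  apply measure_mono_null hsub
  apply measure_iUnion_null
  intro m
  exact support_pos hP _ (by positivity)

lemma ae_mem01 {P : Measure ℝ} [IsProbabilityMeasure P] (hP : IsTriadicCantor P) :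
    ∀ᵐ x ∂P, x ∈ Set.Icc (0:ℝ) 1 := by
  rw [ae_iff]
  convert support01 hP using 2
  rfl

lemma fin_cast0 : (((0 : Fin 3)):ℝ) = 0 := by norm_num
lemma fin_cast1 : (((1 : Fin 3)):ℝ) = 1 := by norm_num
lemma fin_cast2 : (((2 : Fin 3)):ℝ) = 2 := by norm_num

section Integrals

variable {P : Measure ℝ} [IsProbabilityMeasure P] (hP : IsTriadicCantor P)
include hP

lemma integrable_of_cont {f : ℝ → ℝ} (hf : Continuous f) : Integrable f P := by
  obtain ⟨C, hC⟩ : ∃ C, ∀ x ∈ Set.Icc (0:ℝ) 1, ‖f x‖ ≤ C :=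
    isCompact_Icc.exists_bound_of_continuousOn hf.continuousOn
  refine Integrable.mono' (integrable_const C) hf.aestronglyMeasurable ?_
  filter_upwards [ae_mem01 hP] with x hx using hC x hx

lemma int_id : Integrable (fun x : ℝ => x) P := integrable_of_cont hP continuous_id
lemma int_sq : Integrable (fun x : ℝ => x^2) P := integrable_of_cont hP (by fun_prop)

lemma decomp1 {f : ℝ → ℝ} (hf : Continuous f) :
    ∫ x, f x ∂P = (1/3) * (∫ x, f (S 0 x) ∂P + ∫ x, f (S 1 x) ∂P + ∫ x, f (S 2 x) ∂P) := by
  have hint : ∀ j : Fin 3, Integrable f (P.map (S j)) := by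
    intro j
    rw [integrable_map_measure hf.aestronglyMeasurable (continuous_S j).measurable.aemeasurable]
    exact integrable_of_cont hP (hf.comp (continuous_S j))
  have hmap : ∀ j : Fin 3, ∫ x, f x ∂(P.map (S j)) = ∫ x, f (S j x) ∂P := by
    intro j
    exact integral_map (continuous_S j).measurable.aemeasurable hf.aestronglyMeasurable
  conv_lhs => rw [hP]
  rw [integral_smul_measure, integral_add_measure ((hint 0).add_measure (hint 1)) (hint 2),
    integral_add_measure (hint 0) (hint 1), hmap 0, hmap 1, hmap 2]
  norm_num

lemma decompN (k : ℕ) : ∀ (f : ℝ → ℝ), Continuous f →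
    ∫ x, f x ∂P = ((3:ℝ)^k)⁻¹ * ∑ σ : Fin k → Fin 3, ∫ x, f (Sword σ x) ∂P := by
  induction k with
  | zero =>
    intro f hf
    simp [Sword_zero]
  | succ k ih =>
    intro f hf
    have e : ∑ σ : Fin (k+1) → Fin 3, ∫ x, f (Sword σ x) ∂P
        = ∑ p : Fin 3 × (Fin k → Fin 3), ∫ x, f (Sword (Fin.cons p.1 p.2) x) ∂P := by
      rw [← Equiv.sum_comp (Fin.consEquiv (fun _ : Fin (k+1) => Fin 3))
        (fun σ => ∫ x, f (Sword σ x) ∂P)]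
      rfl
    rw [e, Fintype.sum_prod_type, Fin.sum_univ_three]
    have e2 : ∀ j : Fin 3, ∑ τ : Fin k → Fin 3, ∫ x, f (Sword (Fin.cons j τ) x) ∂P
        = ∑ τ : Fin k → Fin 3, ∫ x, (f ∘ S j) (Sword τ x) ∂P := by
      intro j
      refine Finset.sum_congr rfl fun τ _ => ?_
      rw [Sword_cons]
      rfl
    rw [e2 0, e2 1, e2 2]
    have hj : ∀ j : Fin 3, ∫ x, f (S j x) ∂P
        = ((3:ℝ)^k)⁻¹ * ∑ τ : Fin k → Fin 3, ∫ x, (f ∘ S j) (Sword τ x) ∂P := by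
      intro j
      exact ih (f ∘ S j) (hf.comp (continuous_S j))
    rw [decomp1 hP hf, hj 0, hj 1, hj 2]
    ring

lemma integral_quad (c d e : ℝ) :
    ∫ x, (c * x^2 + d * x + e) ∂P
      = c * (∫ x, x^2 ∂P) + d * (∫ x, x ∂P) + e := by
  have h1 : Integrable (fun x : ℝ => c * x^2) P := (int_sq hP).const_mul c
  have h2 : Integrable (fun x : ℝ => d * x) P := (int_id hP).const_mul d
  have key : ∫ x, (c * x^2 + (d * x + e)) ∂P
      = (∫ x, c * x^2 ∂P) + ∫ x, (d * x + e) ∂P :=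
    integral_add h1 (h2.add (integrable_const e))
  have key2 : ∫ x, (d * x + e) ∂P = (∫ x, d * x ∂P) + ∫ x, (e:ℝ) ∂P :=
    integral_add h2 (integrable_const e)
  calc ∫ x, (c * x^2 + d * x + e) ∂P = ∫ x, (c * x^2 + (d * x + e)) ∂P := by
        congr 1; funext x; ring
    _ = c * (∫ x, x^2 ∂P) + d * (∫ x, x ∂P) + e := by
        rw [key, key2, integral_const_mul, integral_const_mul, integral_const]
        simp [measure_univ]
        ring

lemma moment1 : ∫ x, x ∂P = 1/2 := by
  have h := decomp1 hP (f := fun x => x) continuous_id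
  simp only [S_apply, fin_cast0, fin_cast1, fin_cast2] at h
  have e : ∀ d : ℝ, ∫ x, (x/5 + d) ∂P = (1/5) * (∫ x, x ∂P) + d := by
    intro d
    have := integral_quad hP 0 (1/5) d
    simp only [zero_mul, zero_add] at this
    rw [show (fun x : ℝ => x/5 + d) = fun x : ℝ => (1/5) * x + d from by funext x; ring]
    exact this
  simp only [show ∀ x:ℝ, x/5 + 2*(0:ℝ)/5 = x/5 + 0 from fun x => by ring,
    show ∀ x:ℝ, x/5 + 2*(1:ℝ)/5 = x/5 + (2/5) from fun x => by ring,
    show ∀ x:ℝ, x/5 + 2*(2:ℝ)/5 = x/5 + (4/5) from fun x => by ring] at h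
  rw [e 0, e (2/5), e (4/5)] at h
  linarith

lemma moment2 : ∫ x, x^2 ∂P = 13/36 := by
  have h := decomp1 hP (f := fun x => x^2) (by fun_prop)
  simp only [S_apply, fin_cast0, fin_cast1, fin_cast2] at h
  have e : ∀ d : ℝ, ∫ x, (x/5 + d)^2 ∂P
      = (1/25) * (∫ x, x^2 ∂P) + (2*d/5) * (∫ x, x ∂P) + d^2 := by
    intro d
    have := integral_quad hP (1/25) (2*d/5) (d^2)
    rw [show (fun x : ℝ => (x/5 + d)^2)
        = fun x : ℝ => (1/25) * x^2 + (2*d/5) * x + d^2 from by funext x; ring]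
    exact this
  simp only [show ∀ x:ℝ, (x/5 + 2*(0:ℝ)/5)^2 = (x/5 + 0)^2 from fun x => by ring,
    show ∀ x:ℝ, (x/5 + 2*(1:ℝ)/5)^2 = (x/5 + (2/5))^2 from fun x => by ring,
    show ∀ x:ℝ, (x/5 + 2*(2:ℝ)/5)^2 = (x/5 + (4/5))^2 from fun x => by ring] at h
  rw [e 0, e (2/5), e (4/5), moment1 hP] at h
  linarith

lemma integral_affine_sq (c d : ℝ) :
    ∫ x, (c*x + d)^2 ∂P = c^2 * (13/36) + c*d + d^2 := by
  have := integral_quad hP (c^2) (2*c*d) (d^2)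
  rw [show (fun x : ℝ => (c*x + d)^2)
      = fun x : ℝ => c^2 * x^2 + (2*c*d) * x + d^2 from by funext x; ring]
  rw [this, moment1 hP, moment2 hP]
  ring

end Integrals

def g2 (x : ℝ) : ℝ := min ((x - 9/50)^2) ((x - 189/250)^2)
def g3 (x : ℝ) : ℝ := min ((x - 1/10)^2) (min ((x - 1/2)^2) ((x - 9/10)^2))

lemma continuous_g2 : Continuous g2 := Continuous.min (by fun_prop) (by fun_prop)
lemma continuous_g3 : Continuous g3 :=
  Continuous.min (by fun_prop) (Continuous.min (by fun_prop) (by fun_prop))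

lemma g2_left {y : ℝ} (h : y ≤ 117/250) : g2 y = (y - 9/50)^2 :=
  min_eq_left (by nlinarith)

lemma g2_right {y : ℝ} (h : 117/250 ≤ y) : g2 y = (y - 189/250)^2 :=
  min_eq_right (by nlinarith)

lemma g2_le_one {x : ℝ} (h0 : 0 ≤ x) (h1 : x ≤ 1) : g2 x ≤ 1 :=
  le_trans (min_le_left _ _) (by nlinarith)

lemma g3_le_one {x : ℝ} (h0 : 0 ≤ x) (h1 : x ≤ 1) : g3 x ≤ 1 :=
  le_trans (le_trans (min_le_right _ _) (min_le_left _ _)) (by nlinarith)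

lemma g2_nonneg (x : ℝ) : 0 ≤ g2 x := le_min (by positivity) (by positivity)
lemma g3_nonneg (x : ℝ) : 0 ≤ g3 x :=
  le_min (by positivity) (le_min (by positivity) (by positivity))

section MinIntegrals

variable {P : Measure ℝ} [IsProbabilityMeasure P] (hP : IsTriadicCantor P)
include hP

lemma integral_g3 : ∫ x, g3 x ∂P = 1/225 := by
  rw [decomp1 hP continuous_g3]
  have e0 : ∫ x, g3 (S 0 x) ∂P = ∫ x, ((1/5)*x + (-1/10))^2 ∂P := by
    apply integral_congr_ae
    filter_upwards [ae_mem01 hP] with x hx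
    obtain ⟨h0, h1⟩ := hx
    simp only [S_apply, fin_cast0, g3]
    rw [min_eq_left (le_min (by nlinarith) (by nlinarith))]
    ring
  have e1 : ∫ x, g3 (S 1 x) ∂P = ∫ x, ((1/5)*x + (-1/10))^2 ∂P := by
    apply integral_congr_ae
    filter_upwards [ae_mem01 hP] with x hx
    obtain ⟨h0, h1⟩ := hx
    simp only [S_apply, fin_cast1, g3]
    rw [min_eq_right (le_trans (min_le_left _ _) (by nlinarith)),
      min_eq_left (by nlinarith)]
    ring
  have e2 : ∫ x, g3 (S 2 x) ∂P = ∫ x, ((1/5)*x + (-1/10))^2 ∂P := by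
    apply integral_congr_ae
    filter_upwards [ae_mem01 hP] with x hx
    obtain ⟨h0, h1⟩ := hx
    simp only [S_apply, fin_cast2, g3]
    rw [min_eq_right (le_trans (min_le_right _ _) (by nlinarith)),
      min_eq_right (by nlinarith)]
    ring
  rw [e0, e1, e2, integral_affine_sq hP]
  norm_num

lemma integral_g2 : ∫ x, g2 x ∂P = 821/28125 := by
  rw [decomp1 hP continuous_g2]
  have e0 : ∫ x, g2 (S 0 x) ∂P = ∫ x, ((1/5)*x + (-9/50))^2 ∂P := by
    apply integral_congr_ae
    filter_upwards [ae_mem01 hP] with x hx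
    obtain ⟨h0, h1⟩ := hx
    simp only [S_apply, fin_cast0]
    rw [g2_left (by nlinarith)]
    ring
  have e2 : ∫ x, g2 (S 2 x) ∂P = ∫ x, ((1/5)*x + (11/250))^2 ∂P := by
    apply integral_congr_ae
    filter_upwards [ae_mem01 hP] with x hx
    obtain ⟨h0, h1⟩ := hx
    simp only [S_apply, fin_cast2]
    rw [g2_right (by nlinarith)]
    ring
  have e1 : ∫ x, g2 (S 1 x) ∂P = 7249/140625 := by
    have hd := decomp1 hP (f := g2 ∘ S 1) (continuous_g2.comp (continuous_S 1))
    simp only [Function.comp_apply] at hd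
    rw [show (fun x => g2 (S 1 x)) = fun x => (g2 ∘ S 1) x from rfl]
    rw [decomp1 hP (continuous_g2.comp (continuous_S 1))]
    have f0 : ∫ x, (g2 ∘ S 1) (S 0 x) ∂P = ∫ x, ((1/25)*x + (11/50))^2 ∂P := by
      apply integral_congr_ae
      filter_upwards [ae_mem01 hP] with x hx
      obtain ⟨h0, h1⟩ := hx
      simp only [Function.comp_apply, S_apply, fin_cast0, fin_cast1]
      rw [g2_left (by nlinarith)]
      ring
    have f1 : ∫ x, (g2 ∘ S 1) (S 1 x) ∂P = ∫ x, ((1/25)*x + (-69/250))^2 ∂P := by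
      apply integral_congr_ae
      filter_upwards [ae_mem01 hP] with x hx
      obtain ⟨h0, h1⟩ := hx
      simp only [Function.comp_apply, S_apply, fin_cast1]
      rw [g2_right (by nlinarith)]
      ring
    have f2 : ∫ x, (g2 ∘ S 1) (S 2 x) ∂P = ∫ x, ((1/25)*x + (-49/250))^2 ∂P := by
      apply integral_congr_ae
      filter_upwards [ae_mem01 hP] with x hx
      obtain ⟨h0, h1⟩ := hx
      simp only [Function.comp_apply, S_apply, fin_cast1, fin_cast2]
      rw [g2_right (by nlinarith)]
      ring
    rw [f0, f1, f2, integral_affine_sq hP, integral_affine_sq hP, integral_affine_sq hP]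
    norm_num
  rw [e0, e1, e2, integral_affine_sq hP, integral_affine_sq hP]
  norm_num

end MinIntegrals

lemma pow5sq (ℓ : ℕ) : ((5:ℝ)^ℓ)^2 = 25^ℓ := by
  rw [← pow_mul, mul_comm, pow_mul]
  norm_num

lemma ciInf_set_eq_inf' {A : Set ℝ} (hfin : A.Finite) (hne : A.Nonempty) (g : ℝ → ℝ) :
    (⨅ a : A, g a) = hfin.toFinset.inf' (by simpa using hne) g := by
  rw [Finset.inf'_eq_csInf_image, Set.Finite.coe_toFinset, Set.image_eq_range]
  rfl

lemma continuous_finset_inf' {ι : Type*} {s : Finset ι} (hs : s.Nonempty) {f : ι → ℝ → ℝ}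
    (hf : ∀ i, Continuous (f i)) : Continuous fun x => s.inf' hs fun i => f i x := by
  induction hs using Finset.Nonempty.cons_induction with
  | singleton a => simpa [Finset.inf'_singleton] using hf a
  | cons a s h hs ih =>
    show Continuous fun x => (Finset.cons a s h).inf' (Finset.cons_nonempty h) fun i => f i x
    have e : (fun x => (Finset.cons a s h).inf' (Finset.cons_nonempty h) fun i => f i x)
        = fun x => min (f a x) (s.inf' hs fun i => f i x) := by
      funext x
      rw [Finset.inf'_cons hs]
    rw [e]
    exact (hf a).min ih

lemma key_cell {ℓ : ℕ} (I : Finset (Fin ℓ → Fin 3)) {A : Set ℝ}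
    (hA : A = (⋃ σ ∈ ({σ | σ ∉ I} : Set (Fin ℓ → Fin 3)),
            Sword σ '' ({9 / 50, 189 / 250} : Set ℝ)) ∪
          ⋃ σ ∈ I, Sword σ '' ({1 / 10, 1 / 2, 9 / 10} : Set ℝ))
    (σ : Fin ℓ → Fin 3) (x : ℝ) (hx : x ∈ Set.Icc (0:ℝ) 1) :
    (⨅ a : A, (Sword σ x - (a:ℝ))^2) = ((25:ℝ)^ℓ)⁻¹ * (if σ ∈ I then g3 x else g2 x) := by
  obtain ⟨hx0, hx1⟩ := hx
  have memA : ∀ a : ℝ, a ∈ A ↔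
      ((∃ τ, τ ∉ I ∧ ∃ b, (b = 9/50 ∨ b = 189/250) ∧ Sword τ b = a) ∨
       (∃ τ, τ ∈ I ∧ ∃ b, (b = 1/10 ∨ b = 1/2 ∨ b = 9/10) ∧ Sword τ b = a)) := by
    intro a
    rw [hA]
    simp only [Set.mem_union, Set.mem_iUnion, Set.mem_image, Set.mem_insert_iff,
      Set.mem_singleton_iff, Set.mem_setOf_eq, exists_prop]
  have hbdd : BddBelow (Set.range fun a : A => (Sword σ x - (a:ℝ))^2) := by
    refine ⟨0, ?_⟩
    rintro _ ⟨a, rfl⟩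
    positivity
  have hne : Nonempty A := by
    by_cases hσ : σ ∈ I
    · exact ⟨⟨Sword σ (1/10), (memA _).mpr (Or.inr ⟨σ, hσ, 1/10, Or.inl rfl, rfl⟩)⟩⟩
    · exact ⟨⟨Sword σ (9/50), (memA _).mpr (Or.inl ⟨σ, hσ, 9/50, Or.inl rfl, rfl⟩)⟩⟩
  have diffsq : ∀ b : ℝ, (Sword σ x - Sword σ b)^2 = ((25:ℝ)^ℓ)⁻¹ * (x - b)^2 := by
    intro b
    rw [Sword_sub, div_pow, pow5sq, div_eq_inv_mul]
  have hinv_nonneg : (0:ℝ) ≤ ((25:ℝ)^ℓ)⁻¹ := by positivity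
  apply le_antisymm
  · -- upper bound
    by_cases hσ : σ ∈ I
    · simp only [hσ, if_true]
      rw [show g3 x = min ((x - 1/10)^2) (min ((x - 1/2)^2) ((x - 9/10)^2)) from rfl,
        mul_min_of_nonneg _ _ hinv_nonneg, mul_min_of_nonneg _ _ hinv_nonneg]
      refine le_min ?_ (le_min ?_ ?_)
      · rw [← diffsq]
        exact ciInf_le hbdd ⟨_, (memA _).mpr (Or.inr ⟨σ, hσ, 1/10, Or.inl rfl, rfl⟩)⟩
      · rw [← diffsq]
        exact ciInf_le hbdd ⟨_, (memA _).mpr (Or.inr ⟨σ, hσ, 1/2, Or.inr (Or.inl rfl), rfl⟩)⟩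
      · rw [← diffsq]
        exact ciInf_le hbdd ⟨_, (memA _).mpr (Or.inr ⟨σ, hσ, 9/10, Or.inr (Or.inr rfl), rfl⟩)⟩
    · simp only [hσ, if_false]
      rw [show g2 x = min ((x - 9/50)^2) ((x - 189/250)^2) from rfl,
        mul_min_of_nonneg _ _ hinv_nonneg]
      refine le_min ?_ ?_
      · rw [← diffsq]
        exact ciInf_le hbdd ⟨_, (memA _).mpr (Or.inl ⟨σ, hσ, 9/50, Or.inl rfl, rfl⟩)⟩
      · rw [← diffsq]
        exact ciInf_le hbdd ⟨_, (memA _).mpr (Or.inl ⟨σ, hσ, 189/250, Or.inr rfl, rfl⟩)⟩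
  · -- lower bound
    apply le_ciInf
    rintro ⟨a, ha⟩
    rw [memA] at ha
    have hgle : (if σ ∈ I then g3 x else g2 x) ≤ 1 := by
      split
      · exact g3_le_one hx0 hx1
      · exact g2_le_one hx0 hx1
    have hfar : ∀ τ : Fin ℓ → Fin 3, τ ≠ σ → ∀ b : ℝ, b ∈ Set.Icc (0:ℝ) 1 →
        ((25:ℝ)^ℓ)⁻¹ * (if σ ∈ I then g3 x else g2 x) ≤ (Sword σ x - Sword τ b)^2 := by
      intro τ hτσ b hb
      have hsep := Sword_sep σ τ (Ne.symm hτσ) x b ⟨hx0, hx1⟩ hb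
      have h2 : ((1:ℝ)/5^ℓ)^2 ≤ |Sword σ x - Sword τ b|^2 :=
        pow_le_pow_left₀ (by positivity) hsep 2
      rw [sq_abs] at h2
      have h3 : ((25:ℝ)^ℓ)⁻¹ ≤ (Sword σ x - Sword τ b)^2 := by
        calc ((25:ℝ)^ℓ)⁻¹ = ((1:ℝ)/5^ℓ)^2 := by
              rw [div_pow, one_pow, pow5sq, one_div]
          _ ≤ _ := h2
      calc ((25:ℝ)^ℓ)⁻¹ * (if σ ∈ I then g3 x else g2 x) ≤ ((25:ℝ)^ℓ)⁻¹ * 1 :=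
            mul_le_mul_of_nonneg_left hgle hinv_nonneg
        _ = ((25:ℝ)^ℓ)⁻¹ := mul_one _
        _ ≤ _ := h3
    rcases ha with ⟨τ, hτ, b, hb, rfl⟩ | ⟨τ, hτ, b, hb, rfl⟩
    · have hb01 : b ∈ Set.Icc (0:ℝ) 1 := by rcases hb with rfl | rfl <;> constructor <;> norm_num
      by_cases hτσ : τ = σ
      · subst hτσ
        simp only [hτ, if_false]
        rw [diffsq]
        apply mul_le_mul_of_nonneg_left _ hinv_nonneg
        rcases hb with rfl | rfl
        · exact min_le_left _ _
        · exact min_le_right _ _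
      · exact hfar τ hτσ b hb01
    · have hb01 : b ∈ Set.Icc (0:ℝ) 1 := by
        rcases hb with rfl | rfl | rfl <;> constructor <;> norm_num
      by_cases hτσ : τ = σ
      · subst hτσ
        simp only [hτ, if_true]
        rw [diffsq]
        apply mul_le_mul_of_nonneg_left _ hinv_nonneg
        rcases hb with rfl | rfl | rfl
        · exact min_le_left _ _
        · exact le_trans (min_le_right _ _) (min_le_left _ _)
        · exact le_trans (min_le_right _ _) (min_le_right _ _)
      · exact hfar τ hτσ b hb01

theorem stmt11 (P : Measure ℝ) [IsProbabilityMeasure P] (hP : IsTriadicCantor P)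
    (ℓ n : ℕ) (hℓ : 1 ≤ ℓ) (h1 : 2 * 3 ^ ℓ < n) (h2 : n < 3 ^ (ℓ + 1))
    (I : Finset (Fin ℓ → Fin 3)) (hI : I.card = n - 2 * 3 ^ ℓ) :
    distortion P
        ((⋃ σ ∈ ({σ | σ ∉ I} : Set (Fin ℓ → Fin 3)),
            Sword σ '' ({9 / 50, 189 / 250} : Set ℝ)) ∪
          ⋃ σ ∈ I, Sword σ '' ({1 / 10, 1 / 2, 9 / 10} : Set ℝ))
      = ((75 : ℝ) ^ ℓ)⁻¹ *
          (((3 ^ (ℓ + 1) : ℝ) - n) * (821 / 28125) +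
            ((n : ℝ) - 2 * 3 ^ ℓ) * (1 / 225)) := by
  have hIcard_pos : 0 < I.card := by rw [hI]; omega
  obtain ⟨σ0, hσ0⟩ := Finset.card_pos.mp hIcard_pos
  set A : Set ℝ := (⋃ σ ∈ ({σ | σ ∉ I} : Set (Fin ℓ → Fin 3)),
            Sword σ '' ({9 / 50, 189 / 250} : Set ℝ)) ∪
          ⋃ σ ∈ I, Sword σ '' ({1 / 10, 1 / 2, 9 / 10} : Set ℝ) with hA
  have hAne : A.Nonempty := by
    refine ⟨Sword σ0 (1/10), ?_⟩
    rw [hA]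
    apply Set.mem_union_right
    exact Set.mem_iUnion₂.mpr ⟨σ0, hσ0, ⟨1/10, Set.mem_insert _ _, rfl⟩⟩
  have hfin : A.Finite := by
    have hbig : (⋃ τ : Fin ℓ → Fin 3,
        Sword τ '' ({9/50, 189/250, 1/10, 1/2, 9/10} : Set ℝ)).Finite :=
      Set.finite_iUnion fun τ => Set.Finite.image _
        (((((Set.finite_singleton _).insert _).insert _).insert _).insert _)
    refine hbig.subset ?_
    rw [hA]
    apply Set.union_subset
    · refine Set.iUnion₂_subset fun τ _ => ?_
      refine (Set.image_mono ?_).trans (Set.subset_iUnion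
        (fun τ => Sword τ '' ({9/50, 189/250, 1/10, 1/2, 9/10} : Set ℝ)) τ)
      intro b hb
      simp only [Set.mem_insert_iff, Set.mem_singleton_iff] at hb ⊢
      tauto
    · refine Set.iUnion₂_subset fun τ _ => ?_
      refine (Set.image_mono ?_).trans (Set.subset_iUnion
        (fun τ => Sword τ '' ({9/50, 189/250, 1/10, 1/2, 9/10} : Set ℝ)) τ)
      intro b hb
      simp only [Set.mem_insert_iff, Set.mem_singleton_iff] at hb ⊢
      tauto
  have hFcont : Continuous fun y => ⨅ a : A, (y - (a:ℝ))^2 := by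
    have he : (fun y => ⨅ a : A, (y - (a:ℝ))^2)
        = fun y => hfin.toFinset.inf' (by simpa using hAne) fun a => (y - a)^2 := by
      funext y
      exact ciInf_set_eq_inf' hfin hAne (fun a => (y - a)^2)
    rw [he]
    exact continuous_finset_inf' _ (fun i => by fun_prop)
  have hd : distortion P A = ((3:ℝ)^ℓ)⁻¹ *
      ∑ σ : Fin ℓ → Fin 3, ∫ x, (⨅ a : A, ((Sword σ x) - (a:ℝ))^2) ∂P :=
    decompN hP ℓ (fun y => ⨅ a : A, (y - (a:ℝ))^2) hFcont
  rw [hd]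
  have hterm : ∀ σ : Fin ℓ → Fin 3, ∫ x, (⨅ a : A, ((Sword σ x) - (a:ℝ))^2) ∂P
      = ((25:ℝ)^ℓ)⁻¹ * (if σ ∈ I then (1/225 : ℝ) else 821/28125) := by
    intro σ
    have h1 : ∫ x, (⨅ a : A, ((Sword σ x) - (a:ℝ))^2) ∂P
        = ∫ x, ((25:ℝ)^ℓ)⁻¹ * (if σ ∈ I then g3 x else g2 x) ∂P := by
      apply integral_congr_ae
      filter_upwards [ae_mem01 hP] with x hx
      exact key_cell I hA σ x hx
    rw [h1, integral_const_mul]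
    by_cases hσ : σ ∈ I
    · simp only [hσ, if_true]
      rw [integral_g3 hP]
    · simp only [hσ, if_false]
      rw [integral_g2 hP]
  rw [Finset.sum_congr rfl fun σ _ => hterm σ, ← Finset.mul_sum]
  have hsum : ∑ σ : Fin ℓ → Fin 3, (if σ ∈ I then (1/225:ℝ) else 821/28125)
      = (I.card : ℝ) * (1/225) + ((Iᶜ : Finset (Fin ℓ → Fin 3)).card : ℝ) * (821/28125) := by
    rw [← Finset.sum_filter_add_sum_filter_not Finset.univ (· ∈ I)]
    have hf1 : Finset.univ.filter (· ∈ I) = I := Finset.filter_univ_mem I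
    have hf2 : Finset.univ.filter (fun x => ¬ x ∈ I) = Iᶜ := by
      rw [Finset.compl_eq_univ_sdiff, Finset.sdiff_eq_filter]
    rw [hf1, hf2]
    rw [Finset.sum_congr rfl (fun x hx => if_pos hx),
      Finset.sum_congr rfl (fun x (hx : x ∈ Iᶜ) => if_neg (Finset.mem_compl.mp hx)),
      Finset.sum_const, Finset.sum_const, nsmul_eq_mul, nsmul_eq_mul]
  rw [hsum]
  have hc1 : (I.card : ℝ) = (n:ℝ) - 2*3^ℓ := by
    rw [hI, Nat.cast_sub h1.le]
    push_cast
    ring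
  have hc2 : ((Iᶜ : Finset (Fin ℓ → Fin 3)).card : ℝ) = (3:ℝ)^(ℓ+1) - n := by
    rw [Finset.card_compl, hI]
    have hcardW : Fintype.card (Fin ℓ → Fin 3) = 3^ℓ := by
      rw [Fintype.card_fun, Fintype.card_fin, Fintype.card_fin]
    rw [hcardW]
    have h3 : (3:ℕ)^(ℓ+1) = 3*3^ℓ := by ring
    have he : 3^ℓ - (n - 2*3^ℓ) = 3^(ℓ+1) - n := by omega
    rw [he, Nat.cast_sub h2.le]
    push_cast
    ring
  rw [hc1, hc2]
  have h75 : ((75:ℝ)^ℓ)⁻¹ = ((3:ℝ)^ℓ)⁻¹ * ((25:ℝ)^ℓ)⁻¹ := by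
    rw [← mul_inv, ← mul_pow]
    norm_num
  rw [h75]
  ring
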